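/- Let C = V(G) ⊆ ℙ² ≅ V(x₀) be an irreducible curve with homogeneous defining polynomial G ∈ k[x₁,x₂,x₃], let X = V(G) ⊆ ℙ³ be the cone over C with vertex v = [1:0:0:0], and let p be a smooth non-flexy point of C. Then the line joining p and v is the unique line l ⊆ ℙ³ through p with I_p(l, X) ≥ 3. -/

import Mathlib

/-- The restriction of a polynomial `h` to the parametrized line `t ↦ p + t • w`,
as a polynomial in `t`. -/
noncomputable def lineEval {k : Type*} [Field k] {n : ℕ} (h : MvPolynomial (Fin n) k)
    (p w : Fin n → k) : Polynomial k :=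
  MvPolynomial.aeval (fun i => Polynomial.C (p i) + Polynomial.C (w i) * Polynomial.X) h

/-- The projective plane curve defined by the homogeneous polynomial `h ∈ k[x₁,x₂,x₃]` has
multiplicity `m` at the projective point `[p]`:  every projective line through `[p]`
(parametrized as `t ↦ [p + t • w]` for `w` linearly independent from `p`) meets the curve
with intersection multiplicity at least `m` at `[p]`, and some line meets it with
intersection multiplicity exactly `m`. -/
def CurveMultAt {k : Type*} [Field k] (h : MvPolynomial (Fin 3) k) (p : Fin 3 → k)
    (m : ℕ) : Prop :=
  (∀ w : Fin 3 → k, LinearIndependent k ![p, w] → Polynomial.X ^ m ∣ lineEval h p w) ∧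
  (∃ w : Fin 3 → k, LinearIndependent k ![p, w] ∧ ¬ Polynomial.X ^ (m + 1) ∣ lineEval h p w)

/-- A point of a plane curve is a smooth point when its multiplicity is `1`. -/
def CurveSmoothAt {k : Type*} [Field k] (h : MvPolynomial (Fin 3) k) (p : Fin 3 → k) :
    Prop :=
  CurveMultAt h p 1

/-- A (smooth) point `[p]` of the plane curve `{h = 0}` is flexy when some line through
`[p]` meets the curve with intersection multiplicity at least `3` at `[p]`; for plane
curves at smooth points this is the condition `g₁ ∣ g₂` on the local expansion
`g = g₁ + g₂ + ⋯` of a local defining equation. -/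
def FlexyAt {k : Type*} [Field k] (h : MvPolynomial (Fin 3) k) (p : Fin 3 → k) : Prop :=
  ∃ w : Fin 3 → k, LinearIndependent k ![p, w] ∧ Polynomial.X ^ 3 ∣ lineEval h p w


open MvPolynomial in
lemma aeval_mul_of_isHomogeneous {k : Type*} [Field k] {d : ℕ} (G : MvPolynomial (Fin 3) k)
    (hhom : G.IsHomogeneous d) (r : Polynomial k) (f : Fin 3 → Polynomial k) :
    MvPolynomial.aeval (fun i => r * f i) G = r ^ d * MvPolynomial.aeval f G := by
  rw [aeval_def, aeval_def, eval₂_eq', eval₂_eq', Finset.mul_sum]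
  refine Finset.sum_congr rfl fun m hm => ?_
  have hd : ∑ i, m i = d := by
    have h := hhom (MvPolynomial.mem_support_iff.mp hm)
    simpa [Finsupp.weight_apply, Finsupp.sum_fintype] using h
  rw [← hd]
  simp only [mul_pow, Finset.prod_mul_distrib, Finset.prod_pow_eq_pow_sum]
  ring

open MvPolynomial in
/-- Let `C = V(G) ⊆ ℙ² ≅ V(x₀)` be an irreducible curve with homogeneous defining
polynomial `G ∈ k[x₁,x₂,x₃]`, let `X = V(G) ⊆ ℙ³` be the cone over `C` with vertex
`v = [1:0:0:0]` (defined by `G` viewed as a polynomial on `ℙ³` not involving `x₀`, via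
`rename Fin.succ`), and let `[p]` be a smooth non-flexy point of `C`.  Then the line
joining `[p]` and `v` is the unique line `l ⊆ ℙ³` through `[p]` with `I_p(l, X) ≥ 3`:
for any line through `[0 : p]` in `ℙ³`, parametrized as `t ↦ [(0,p) + t • w]`, the
intersection multiplicity with `X` at `[0 : p]` is at least `3` if and only if the line
passes through the vertex, i.e. `(1,0,0,0) ∈ span {(0,p), w}`. -/
theorem unique_line_with_contact_three_on_cone {k : Type*} [Field k] [IsAlgClosed k]
    {d : ℕ} (G : MvPolynomial (Fin 3) k) (hhom : G.IsHomogeneous d)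
    (hirr : (MvPolynomial.vanishingIdeal k
      {x : Fin 3 → k | eval x G = 0}).IsPrime)
    (p : Fin 3 → k) (hp0 : p ≠ 0) (hpC : eval p G = 0)
    (hsm : CurveSmoothAt G p) (hnfl : ¬ FlexyAt G p) :
    ∀ w : Fin 4 → k, LinearIndependent k ![(Fin.cons 0 p : Fin 4 → k), w] →
      (Polynomial.X ^ 3 ∣ lineEval (rename Fin.succ G) (Fin.cons 0 p) w ↔
        (Fin.cons 1 0 : Fin 4 → k) ∈
          Submodule.span k {(Fin.cons 0 p : Fin 4 → k), w}) := by
  intro w hw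
  set w' : Fin 3 → k := fun i => w i.succ with hw'def
  have hle : lineEval (rename Fin.succ G) (Fin.cons 0 p) w = lineEval G p w' := by
    simp [lineEval, aeval_rename, Function.comp_def]
    rfl
  rw [hle]
  by_cases hli : LinearIndependent k ![p, w']
  · refine iff_of_false (fun h3 => hnfl ⟨w', hli, h3⟩) (fun hmem => ?_)
    rw [Submodule.mem_span_pair] at hmem
    obtain ⟨a, b, hab⟩ := hmem
    have h0 : a • p + b • w' = 0 := by
      funext i
      have h := congrFun hab i.succ
      simpa [w'] using h
    obtain ⟨ha, hb⟩ := (LinearIndependent.pair_iff.mp hli) a b h0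
    have h := congrFun hab 0
    simp [ha, hb] at h
  · have h1 := (LinearIndependent.pair_iff' hp0).not.mp hli
    push_neg at h1
    obtain ⟨c, hc⟩ := h1
    -- w' = c • p
    have hw0 : w 0 ≠ 0 := by
      intro hw0
      have hcons0 : (Fin.cons 0 p : Fin 4 → k) ≠ 0 := by
        intro h
        apply hp0
        funext i
        exact congrFun h i.succ
      refine (LinearIndependent.pair_iff' hcons0).mp hw c ?_
      funext i
      refine Fin.cases ?_ (fun j => ?_) i
      · simpa using hw0.symm
      · have := congrFun hc j
        simpa using this
    constructor
    · intro _
      rw [Submodule.mem_span_pair]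
      refine ⟨-(c / w 0), (w 0)⁻¹, ?_⟩
      funext i
      refine Fin.cases ?_ (fun j => ?_) i
      · simp only [Pi.add_apply, Pi.smul_apply, Fin.cons_zero, smul_eq_mul, mul_zero,
          neg_zero, zero_add]
        field_simp
      · have hcj : w j.succ = c * p j := by simpa using (congrFun hc j).symm
        simp only [Pi.add_apply, Pi.smul_apply, Fin.cons_succ, smul_eq_mul, hcj, Pi.zero_apply]
        field_simp
        ring
    · intro _
      have hz : lineEval G p w' = 0 := by
        have heq : (fun i => Polynomial.C (p i) + Polynomial.C (w' i) * Polynomial.X)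
            = fun i => (1 + Polynomial.C c * Polynomial.X) * Polynomial.C (p i) := by
          funext i
          have : w' i = c * p i := by simpa using (congrFun hc i).symm
          rw [this, map_mul]
          ring
        rw [lineEval, heq, aeval_mul_of_isHomogeneous G hhom]
        have : MvPolynomial.aeval (fun i => Polynomial.C (p i)) G
            = Polynomial.C (eval p G) := by
          rw [aeval_def, show algebraMap k (Polynomial k) = Polynomial.C from rfl]
          have h := MvPolynomial.eval₂_comp_left (Polynomial.C : k →+* Polynomial k)
            (RingHom.id k) p G
          simp only [RingHom.comp_id, Function.comp_def] at h
          rw [← h]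
          rfl
        rw [this, hpC]
        simp
      rw [hz]
      exact dvd_zero _
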